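/- Strengthening of the Chevalley–Warning theorem for a fixed number of fixed-degree polynomials: Let c, d be positive integers. There exists a constant k = k(c, d), depending only on c and d, such that for every prime finite field F, every n ≥ k, and all polynomials P_1, …, P_c : F^n → F of total degree at most d, if P_1, …, P_c have at least one common zero in F^n, then they have at least |F|^{n−k} common zeros in F^n. -/
import Mathlib

open MvPolynomial Finset

/-- `f : F^n → F` is a polynomial function of total degree at most `d`. -/
def IsPolyDeg {F : Type} [CommSemiring F] {n : ℕ} (d : ℕ) (f : (Fin n → F) → F) : Prop :=
  ∃ P : MvPolynomial (Fin n) F, P.totalDegree ≤ d ∧ ∀ x, f x = MvPolynomial.eval x P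

namespace CWAux

/-! ### Numeric lemmas -/

lemma step1 (m q : ℕ) (hm : 1 ≤ m) (hq : m ≤ q) : (q + 1) ^ (m - 1) ≤ m * q ^ (m - 1) := by
  obtain ⟨m', rfl⟩ := Nat.exists_eq_add_of_le hm
  simp only [Nat.add_sub_cancel_left] at *
  rw [add_pow]
  have hbound : ∀ i ∈ Finset.range (m' + 1),
      q ^ i * 1 ^ (m' - i) * m'.choose i ≤ q ^ m' := by
    intro i hi
    rw [Finset.mem_range] at hi
    have hi' : i ≤ m' := by omega
    have h1 : m'.choose i = m'.choose (m' - i) := by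
      rw [Nat.choose_symm hi']
    have h2 : m'.choose (m' - i) ≤ m' ^ (m' - i) := Nat.choose_le_pow _ _
    have h3 : m' ^ (m' - i) ≤ q ^ (m' - i) := Nat.pow_le_pow_left (by omega) _
    calc q ^ i * 1 ^ (m' - i) * m'.choose i = q ^ i * m'.choose i := by ring_nf
      _ ≤ q ^ i * q ^ (m' - i) := by
          exact Nat.mul_le_mul_left _ (h1 ▸ h2.trans h3)
      _ = q ^ m' := by rw [← pow_add]; congr 1; omega
  calc (∑ i ∈ Finset.range (m' + 1), q ^ i * 1 ^ (m' - i) * m'.choose i)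
      ≤ ∑ _i ∈ Finset.range (m' + 1), q ^ m' := Finset.sum_le_sum hbound
    _ = (m' + 1) * q ^ m' := by rw [Finset.sum_const, Finset.card_range, smul_eq_mul]
    _ = (1 + m') * q ^ m' := by ring

lemma key (m : ℕ) (hm : 1 ≤ m) : ∀ q, m ≤ q → q ^ (m - 1) ≤ m ^ (q - 1) := by
  intro q hq
  induction q, hq using Nat.le_induction with
  | base => exact le_refl _
  | succ q hq ih =>
    have h1 := step1 m q hm hq
    have h2 : m * q ^ (m - 1) ≤ m * m ^ (q - 1) := Nat.mul_le_mul_left _ ih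
    have h3 : m * m ^ (q - 1) = m ^ q := by
      rw [← pow_succ']
      congr 1
      omega
    have : (q + 1) ^ (m - 1) ≤ m ^ q := le_trans h1 (le_trans h2 (le_of_eq h3))
    simpa using this

/-! ### Exponent reduction -/

/-- Reduce an exponent `e` modulo `k` (keeping it positive if it was positive). -/
def redE (k e : ℕ) : ℕ := if e = 0 then 0 else (e - 1) % k + 1

lemma redE_zero (k : ℕ) : redE k 0 = 0 := by simp [redE]

lemma redE_le_self (k e : ℕ) : redE k e ≤ e := by
  unfold redE
  split
  · omega
  · have := Nat.mod_le (e - 1) k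
    omega

lemma redE_le (k e : ℕ) (hk : 1 ≤ k) : redE k e ≤ k := by
  unfold redE
  split
  · omega
  · have := Nat.mod_lt (e - 1) (show 0 < k by omega)
    omega

lemma pow_redE {F : Type} [Field F] [Fintype F] (t : F) (e : ℕ) :
    t ^ redE (Fintype.card F - 1) e = t ^ e := by
  rcases eq_or_ne e 0 with rfl | he
  · simp [redE]
  rcases eq_or_ne t 0 with rfl | ht
  · rw [zero_pow he, zero_pow]
    simp [redE, he]
  · have h1 : t ^ (Fintype.card F - 1) = 1 := FiniteField.pow_card_sub_one_eq_one t ht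
    set k := Fintype.card F - 1 with hk
    have hk0 : 0 < k := by
      have : 1 < Fintype.card F := Fintype.one_lt_card
      omega
    have hdm : k * ((e - 1) / k) + (e - 1) % k = e - 1 := Nat.div_add_mod (e - 1) k
    have heq : e = k * ((e - 1) / k) + ((e - 1) % k + 1) := by omega
    conv_rhs => rw [heq]
    rw [pow_add, pow_mul, h1, one_pow, one_mul]
    simp [redE, he]

/-- Reduce all exponents of a polynomial modulo `k`. -/
noncomputable def redPoly {F : Type} [CommSemiring F] {n : ℕ} (k : ℕ)
    (P : MvPolynomial (Fin n) F) : MvPolynomial (Fin n) F :=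
  P.support.sum fun d =>
    monomial (Finsupp.mapRange (redE k) (redE_zero k) d) (coeff d P)

lemma eval_redPoly {F : Type} [Field F] [Fintype F] {n : ℕ}
    (P : MvPolynomial (Fin n) F) (x : Fin n → F) :
    eval x (redPoly (Fintype.card F - 1) P) = eval x P := by
  rw [redPoly, map_sum, eval_eq x P]
  apply Finset.sum_congr rfl
  intro d _
  rw [eval_monomial]
  congr 1
  rw [Finsupp.prod_mapRange_index (by simp)]
  rw [Finsupp.prod]
  apply Finset.prod_congr rfl
  intro i _
  exact pow_redE (x i) (d i)

lemma totalDegree_redPoly_le {F : Type} [CommSemiring F] {n : ℕ} (k : ℕ)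
    (P : MvPolynomial (Fin n) F) :
    (redPoly k P).totalDegree ≤ P.totalDegree := by
  refine (totalDegree_finset_sum _ _).trans (Finset.sup_le fun d hd => ?_)
  refine (totalDegree_monomial_le _ _).trans ?_
  have h1 : ((Finsupp.mapRange (redE k) (redE_zero k) d).sum fun _ e => e) ≤
      d.sum fun _ e => e := by
    rw [Finsupp.sum_mapRange_index (by simp)]
    rw [Finsupp.sum, Finsupp.sum]
    exact Finset.sum_le_sum fun i _ => redE_le_self k (d i)
  exact h1.trans (le_totalDegree hd)

lemma degreeOf_redPoly_le {F : Type} [CommSemiring F] {n : ℕ} (k : ℕ) (hk : 1 ≤ k)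
    (P : MvPolynomial (Fin n) F) (i : Fin n) :
    (redPoly k P).degreeOf i ≤ k := by
  rw [degreeOf_le_iff]
  intro m hm
  rw [mem_support_iff, redPoly, coeff_sum] at hm
  obtain ⟨d, _, hd2⟩ := Finset.exists_ne_zero_of_sum_ne_zero hm
  rw [coeff_monomial] at hd2
  have : Finsupp.mapRange (redE k) (redE_zero k) d = m := by
    by_contra h
    rw [if_neg h] at hd2
    exact hd2 rfl
  rw [← this, Finsupp.mapRange_apply]
  exact redE_le k (d i) hk

/-! ### The main counting lemma -/

lemma main_count {F : Type} [Field F] [Fintype F] [DecidableEq F] (s : ℕ)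
    (hs : Fintype.card F = s + 1) :
    ∀ (n : ℕ) (f : MvPolynomial (Fin n) F), f ≠ 0 → (∀ i, f.degreeOf i ≤ s) →
    (s + 1) ^ (n * s) ≤
      (univ.filter fun x : Fin n → F => eval x f ≠ 0).card ^ s * (s + 1) ^ f.totalDegree := by
  intro n
  induction n with
  | zero =>
    intro f hf _
    obtain ⟨a, rfl⟩ := C_surjective (Fin 0) f
    have ha : a ≠ 0 := fun h => hf (by rw [h, map_zero])
    have hfilter : (univ.filter fun x : Fin 0 → F => eval x (C a) ≠ 0) = univ := by
      refine Finset.filter_eq_self.mpr fun x _ => ?_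
      simpa using ha
    rw [hfilter]
    have hcard : (univ : Finset (Fin 0 → F)).card = 1 := by simp
    rw [hcard]
    simp
  | succ n ih =>
    intro f hf hred
    set Q := finSuccEquiv F n f with hQdef
    have hQ0 : Q ≠ 0 := by
      rw [hQdef, ne_eq, EmbeddingLike.map_eq_zero_iff]
      exact hf
    set e := Q.natDegree with he_def
    set g := Q.coeff e with hg_def
    have hg0 : g ≠ 0 := by
      rw [hg_def, he_def]
      exact mt Polynomial.leadingCoeff_eq_zero.mp hQ0
    have he : e ≤ s := by
      rw [he_def, hQdef, natDegree_finSuccEquiv]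
      exact hred 0
    have hDg : g.totalDegree + e ≤ f.totalDegree := by
      rw [hg_def, hQdef]
      exact totalDegree_coeff_finSuccEquiv_add_le f e (by rw [← hQdef, ← hg_def]; exact hg0)
    have hgred : ∀ i, g.degreeOf i ≤ s := fun i =>
      (degreeOf_coeff_finSuccEquiv f i e).trans (hred i.succ)
    have IH := ih g hg0 hgred
    set T := (univ.filter fun y : Fin n → F => eval y g ≠ 0) with hT
    set S := (univ.filter fun x : Fin (n + 1) → F => eval x f ≠ 0) with hS
    -- Fiber counting
    have fiber : ∀ y ∈ T,
        s + 1 - e ≤ (univ.filter fun t : F => eval (Fin.cons t y) f ≠ 0).card := by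
      intro y hy
      have hyg : eval y g ≠ 0 := (Finset.mem_filter.mp hy).2
      set h : Polynomial F := Q.map (eval y) with hh_def
      have hcoeff : h.coeff e = eval y g := by
        rw [hh_def, Polynomial.coeff_map, hg_def]
      have hh0 : h ≠ 0 := fun hc => hyg (by rw [← hcoeff, hc, Polynomial.coeff_zero])
      have hdeg : h.natDegree ≤ e := by
        rw [hh_def, he_def]
        exact Polynomial.natDegree_map_le
      have hev : ∀ t, eval (Fin.cons t y) f = h.eval t := fun t =>
        eval_eq_eval_mv_eval' y t f
      have hzero : (univ.filter fun t : F => h.eval t = 0).card ≤ e := by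
        calc (univ.filter fun t : F => h.eval t = 0).card
            ≤ h.roots.toFinset.card := by
              apply Finset.card_le_card
              intro t ht
              rw [Multiset.mem_toFinset, Polynomial.mem_roots hh0]
              exact (Finset.mem_filter.mp ht).2
          _ ≤ Multiset.card h.roots := Multiset.toFinset_card_le _
          _ ≤ h.natDegree := Polynomial.card_roots' h
          _ ≤ e := hdeg
      have hsplit : (univ.filter fun t : F => h.eval t = 0).card +
          (univ.filter fun t : F => ¬(h.eval t = 0)).card = Fintype.card F := by
        rw [← Finset.card_univ]
        exact Finset.card_filter_add_card_filter_not _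
      have hfeq : (univ.filter fun t : F => eval (Fin.cons t y) f ≠ 0) =
          (univ.filter fun t : F => ¬(h.eval t = 0)) := by
        apply Finset.filter_congr
        intro t _
        rw [hev t]
      rw [hfeq]
      omega
    -- Put the fibers together
    have hcount : (s + 1 - e) * T.card ≤ S.card := by
      set Fib : (Fin n → F) → Finset (Fin (n + 1) → F) := fun y =>
        (univ.filter fun t : F => eval (Fin.cons t y) f ≠ 0).image
          (fun t => (Fin.cons t y : Fin (n + 1) → F)) with hFib
      have hinj : ∀ y : Fin n → F,
          Function.Injective (fun t : F => (Fin.cons t y : Fin (n + 1) → F)) := by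
        intro y t t' hcons
        have : (Fin.cons t y : Fin (n + 1) → F) 0 = (Fin.cons t' y : Fin (n + 1) → F) 0 :=
          congrFun hcons 0
        simpa using this
      have hsub : T.biUnion Fib ⊆ S := by
        intro x hx
        rw [Finset.mem_biUnion] at hx
        obtain ⟨y, _, hx⟩ := hx
        rw [hFib, Finset.mem_image] at hx
        obtain ⟨t, ht, rfl⟩ := hx
        exact Finset.mem_filter.mpr ⟨Finset.mem_univ _, (Finset.mem_filter.mp ht).2⟩
      have hdisj : ∀ y ∈ T, ∀ y' ∈ T, y ≠ y' → Disjoint (Fib y) (Fib y') := by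
        intro y _ y' _ hne
        rw [Finset.disjoint_left]
        rintro x hx hx'
        rw [hFib, Finset.mem_image] at hx hx'
        obtain ⟨t, _, rfl⟩ := hx
        obtain ⟨t', _, hEq⟩ := hx'
        apply hne
        have := congrArg Fin.tail hEq
        simpa [Fin.tail_cons] using this.symm
      have hcardFib : ∀ y ∈ T, s + 1 - e ≤ (Fib y).card := by
        intro y hy
        rw [hFib]
        rw [Finset.card_image_of_injective _ (hinj y)]
        exact fiber y hy
      calc (s + 1 - e) * T.card = ∑ _y ∈ T, (s + 1 - e) := by
            rw [Finset.sum_const, smul_eq_mul, mul_comm]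
        _ ≤ ∑ y ∈ T, (Fib y).card := Finset.sum_le_sum hcardFib
        _ = (T.biUnion Fib).card := (Finset.card_biUnion hdisj).symm
        _ ≤ S.card := Finset.card_le_card hsub
    -- The key numeric inequality
    have hkey : (s + 1) ^ (s - e) ≤ (s + 1 - e) ^ s := by
      have h1 : 1 ≤ s + 1 - e := by omega
      have h2 : s + 1 - e ≤ s + 1 := by omega
      have := key (s + 1 - e) h1 (s + 1) h2
      have heq1 : s + 1 - e - 1 = s - e := by omega
      have heq2 : s + 1 - 1 = s := by omega
      rwa [heq1, heq2] at this
    -- Final arithmetic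
    obtain ⟨r, hr⟩ := Nat.exists_eq_add_of_le hDg
    calc (s + 1) ^ ((n + 1) * s)
        = (s + 1) ^ (n * s) * ((s + 1) ^ (s - e) * (s + 1) ^ e) := by
          rw [← pow_add, ← pow_add]
          have hse : s - e + e = s := by omega
          rw [show n * s + (s - e + e) = n * s + s by rw [hse]]
          ring_nf
      _ ≤ (T.card ^ s * (s + 1) ^ g.totalDegree) * ((s + 1 - e) ^ s * (s + 1) ^ e) :=
          Nat.mul_le_mul IH (Nat.mul_le_mul_right _ hkey)
      _ = ((s + 1 - e) * T.card) ^ s * ((s + 1) ^ g.totalDegree * (s + 1) ^ e) := by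
          rw [mul_pow]; ring
      _ ≤ S.card ^ s * ((s + 1) ^ g.totalDegree * (s + 1) ^ e) :=
          Nat.mul_le_mul_right _ (Nat.pow_le_pow_left hcount s)
      _ ≤ S.card ^ s * (s + 1) ^ f.totalDegree := by
          apply Nat.mul_le_mul_left
          rw [← pow_add]
          exact Nat.pow_le_pow_right (by omega) (by omega)

end CWAux

/-- Strengthening of Chevalley–Warning for a fixed number of fixed-degree polynomials:
there is `k = k(c, d)` such that over any prime field `F` and in any dimension `n ≥ k`,
if `P_1, …, P_c` of degree at most `d` have a common zero, then they have at least
`|F|^{n-k}` common zeros. -/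
theorem chevalley_warning_strengthening (c d : ℕ) (hc : 0 < c) (hd : 0 < d) :
    ∃ k : ℕ, ∀ (p : ℕ) [Fact p.Prime] (n : ℕ), k ≤ n →
      ∀ P : Fin c → (Fin n → ZMod p) → ZMod p,
        (∀ i, IsPolyDeg d (P i)) →
        (∃ x, ∀ i, P i x = 0) →
        p ^ (n - k) ≤ Nat.card {x : Fin n → ZMod p // ∀ i, P i x = 0} := by
  refine ⟨c * d, ?_⟩
  intro p hp n hn P hPdeg hzero
  have hp2 : 2 ≤ p := hp.out.two_le
  set s := p - 1 with hs_def
  have hs1 : 1 ≤ s := by omega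
  have hcard : Fintype.card (ZMod p) = s + 1 := by
    rw [ZMod.card]
    omega
  choose Qp hQdeg hQeval using hPdeg
  set G : MvPolynomial (Fin n) (ZMod p) := ∏ i : Fin c, (1 - Qp i ^ s) with hG
  -- evaluation of G
  have hGeval : ∀ x, eval x G = ∏ i : Fin c, (1 - (P i x) ^ s) := by
    intro x
    rw [hG, map_prod]
    apply Finset.prod_congr rfl
    intro i _
    rw [map_sub, map_one, map_pow, ← hQeval]
  have hGind : ∀ x : Fin n → ZMod p, eval x G ≠ 0 ↔ ∀ i, P i x = 0 := by
    intro x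
    rw [hGeval]
    constructor
    · intro hne i
      by_contra hi
      apply hne
      apply Finset.prod_eq_zero (Finset.mem_univ i)
      rw [ZMod.pow_card_sub_one_eq_one hi]
      ring
    · intro hall
      have : ∀ i : Fin c, (1 - (P i x) ^ s : ZMod p) = 1 := by
        intro i
        rw [hall i, zero_pow (by omega : s ≠ 0), sub_zero]
      rw [Finset.prod_congr rfl fun i _ => this i, Finset.prod_const_one]
      exact one_ne_zero
  -- degree of G
  have hGdeg : G.totalDegree ≤ c * d * s := by
    rw [hG]
    refine (totalDegree_finset_prod _ _).trans ?_
    have hone : ∀ i ∈ (univ : Finset (Fin c)), (1 - Qp i ^ s).totalDegree ≤ d * s := by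
      intro i _
      refine (totalDegree_sub _ _).trans ?_
      rw [totalDegree_one]
      refine max_le (by omega) ?_
      refine (totalDegree_pow _ _).trans ?_
      calc s * (Qp i).totalDegree ≤ s * d := Nat.mul_le_mul_left _ (hQdeg i)
        _ = d * s := by ring
    calc (∑ i : Fin c, (1 - Qp i ^ s).totalDegree) ≤ ∑ _i : Fin c, d * s :=
          Finset.sum_le_sum hone
      _ = c * (d * s) := by rw [Finset.sum_const, smul_eq_mul, Finset.card_univ,
          Fintype.card_fin]
      _ = c * d * s := by ring
  -- reduce G
  set f := CWAux.redPoly s G with hf_def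
  have hsk : Fintype.card (ZMod p) - 1 = s := by omega
  have hfeval : ∀ x, eval x f = eval x G := by
    intro x
    rw [hf_def, ← hsk]
    exact CWAux.eval_redPoly G x
  have hfdeg : f.totalDegree ≤ c * d * s :=
    (CWAux.totalDegree_redPoly_le s G).trans hGdeg
  have hfred : ∀ i, f.degreeOf i ≤ s := fun i => CWAux.degreeOf_redPoly_le s hs1 G i
  have hf0 : f ≠ 0 := by
    obtain ⟨a, ha⟩ := hzero
    intro h
    have h1 : eval a f ≠ 0 := by
      rw [hfeval]
      exact (hGind a).mpr ha
    rw [h, map_zero] at h1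
    exact h1 rfl
  -- apply the counting lemma
  have hmain := CWAux.main_count s hcard n f hf0 hfred
  set N := (univ.filter fun x : Fin n → ZMod p => eval x f ≠ 0).card with hN
  -- identify the filter with the solution set
  have hNcard : Nat.card {x : Fin n → ZMod p // ∀ i, P i x = 0} = N := by
    rw [Nat.card_eq_fintype_card, Fintype.card_subtype, hN]
    congr 1
    apply Finset.filter_congr
    intro x _
    rw [hfeval x]
    exact (hGind x).symm
  rw [hNcard]
  -- final arithmetic
  have hstep : (s + 1) ^ (n * s) ≤ N ^ s * (s + 1) ^ (c * d * s) :=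
    hmain.trans (Nat.mul_le_mul_left _ (Nat.pow_le_pow_right (by omega) hfdeg))
  have hsplit : (s + 1) ^ (n * s) = (s + 1) ^ ((n - c * d) * s) * (s + 1) ^ (c * d * s) := by
    rw [← pow_add]
    congr 1
    have : n - c * d + c * d = n := by omega
    calc n * s = (n - c * d + c * d) * s := by rw [this]
      _ = (n - c * d) * s + c * d * s := by ring
  rw [hsplit] at hstep
  have hcancel : (s + 1) ^ ((n - c * d) * s) ≤ N ^ s :=
    Nat.le_of_mul_le_mul_right hstep (by positivity)
  have hpow : ((s + 1) ^ (n - c * d)) ^ s ≤ N ^ s := by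
    rw [← pow_mul]
    exact hcancel
  have : (s + 1) ^ (n - c * d) ≤ N :=
    (Nat.pow_le_pow_iff_left (by omega : s ≠ 0)).mp hpow
  have hsp : s + 1 = p := by omega
  rwa [hsp] at this
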